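/- For 0 < q < 1 and real x > 0 and t, define K(x,t) = x^t/(1+x) · (1+1/x)_q^t · (1+x)_q^{1-t}, where (1+a)_q^t = ∏_{j≥0}(1+q^j a) / ∏_{j≥0}(1+q^{t+j} a). Then K is a q-constant in x: K(qx, t) = K(x, t) for all x > 0. -/

import Mathlib

set_option maxHeartbeats 1600000


noncomputable def qpochInf (q a : ℝ) : ℝ := ∏' j : ℕ, (1 + q ^ j * a)

noncomputable def qpochT (q a t : ℝ) : ℝ := qpochInf q a / qpochInf q (q ^ t * a)

noncomputable def K (q x t : ℝ) : ℝ :=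
  x ^ t / (1 + x) * qpochT q (1 / x) t * qpochT q x (1 - t)

lemma multipliable_aux {q a : ℝ} (hq0 : 0 < q) (hq1 : q < 1) (ha : 0 ≤ a) :
    Multipliable (fun j : ℕ => 1 + q ^ j * a) := by
  have hpos : ∀ j : ℕ, 0 < 1 + q ^ j * a := by
    intro j
    have : 0 ≤ q ^ j * a := mul_nonneg (pow_nonneg hq0.le j) ha
    linarith
  have hlog : Summable (fun j : ℕ => Real.log (1 + q ^ j * a)) := by
    refine Summable.of_nonneg_of_le ?_ ?_ ((summable_geometric_of_lt_one hq0.le hq1).mul_right a)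
    · exact fun j => Real.log_nonneg (by have : 0 ≤ q ^ j * a := mul_nonneg (pow_nonneg hq0.le j) ha; linarith)
    · exact fun j => by have := Real.log_le_sub_one_of_pos (hpos j); linarith
  exact Real.multipliable_of_summable_log hpos hlog

lemma summable_log_aux {q a : ℝ} (hq0 : 0 < q) (hq1 : q < 1) (ha : 0 ≤ a) :
    Summable (fun j : ℕ => Real.log (1 + q ^ j * a)) := by
  have hpos : ∀ j : ℕ, 0 < 1 + q ^ j * a := by
    intro j
    have : 0 ≤ q ^ j * a := mul_nonneg (pow_nonneg hq0.le j) ha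
    linarith
  refine Summable.of_nonneg_of_le ?_ ?_ ((summable_geometric_of_lt_one hq0.le hq1).mul_right a)
  · exact fun j => Real.log_nonneg (by have : 0 ≤ q ^ j * a := mul_nonneg (pow_nonneg hq0.le j) ha; linarith)
  · exact fun j => by have := Real.log_le_sub_one_of_pos (hpos j); linarith

lemma qpochInf_pos {q a : ℝ} (hq0 : 0 < q) (hq1 : q < 1) (ha : 0 ≤ a) : 0 < qpochInf q a := by
  have hpos : ∀ j : ℕ, 0 < 1 + q ^ j * a := by
    intro j
    have : 0 ≤ q ^ j * a := mul_nonneg (pow_nonneg hq0.le j) ha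
    linarith
  have h := Real.rexp_tsum_eq_tprod hpos (summable_log_aux hq0 hq1 ha)
  unfold qpochInf
  rw [← h]
  exact Real.exp_pos _

lemma qpochInf_shift {q a : ℝ} (hq0 : 0 < q) (hq1 : q < 1) (ha : 0 ≤ a) :
    qpochInf q a = (1 + a) * qpochInf q (q * a) := by
  unfold qpochInf
  have hm : Multipliable (fun n : ℕ => 1 + q ^ (n + 1) * a) :=
    (multipliable_aux hq0 hq1 (mul_nonneg hq0.le ha)).congr fun n => by rw [pow_succ]; ring
  rw [tprod_eq_zero_mul' hm, pow_zero, one_mul]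
  congr 1
  exact tprod_congr fun j => by rw [pow_succ]; ring

theorem stmt_0 (q x t : ℝ) (hq0 : 0 < q) (hq1 : q < 1) (hx : 0 < x) :
    K q (q * x) t = K q x t := by
  have hqx : 0 < q * x := mul_pos hq0 hx
  have hqt : (0:ℝ) < q ^ t := Real.rpow_pos_of_pos hq0 t
  have hq1t : (0:ℝ) < q ^ (1 - t) := Real.rpow_pos_of_pos hq0 (1 - t)
  have h1 : qpochInf q (1 / (q * x)) = (1 + 1 / (q * x)) * qpochInf q (1 / x) := by
    have := qpochInf_shift hq0 hq1 (a := 1 / (q * x)) (by positivity)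
    rwa [show q * (1 / (q * x)) = 1 / x by field_simp] at this
  have h2 : qpochInf q (q ^ t * (1 / (q * x)))
      = (1 + q ^ t * (1 / (q * x))) * qpochInf q (q ^ t * (1 / x)) := by
    have := qpochInf_shift hq0 hq1 (a := q ^ t * (1 / (q * x))) (by positivity)
    rwa [show q * (q ^ t * (1 / (q * x))) = q ^ t * (1 / x) by field_simp] at this
  have h3 : qpochInf q x = (1 + x) * qpochInf q (q * x) :=
    qpochInf_shift hq0 hq1 hx.le
  have h4 : qpochInf q (q ^ (1 - t) * x)
      = (1 + q ^ (1 - t) * x) * qpochInf q (q ^ (1 - t) * (q * x)) := by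
    have := qpochInf_shift hq0 hq1 (a := q ^ (1 - t) * x) (by positivity)
    rwa [show q * (q ^ (1 - t) * x) = q ^ (1 - t) * (q * x) by ring] at this
  have hA1 : qpochInf q (1 / x) ≠ 0 := (qpochInf_pos hq0 hq1 (by positivity)).ne'
  have hA2 : qpochInf q (q ^ t * (1 / x)) ≠ 0 := (qpochInf_pos hq0 hq1 (by positivity)).ne'
  have hA3 : qpochInf q (q * x) ≠ 0 := (qpochInf_pos hq0 hq1 hqx.le).ne'
  have hA4 : qpochInf q (q ^ (1 - t) * (q * x)) ≠ 0 := (qpochInf_pos hq0 hq1 (by positivity)).ne'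
  have hmul : (q * x) ^ t = q ^ t * x ^ t := Real.mul_rpow hq0.le hx.le
  have hq1t' : q ^ (1 - t) = q / q ^ t := by
    rw [Real.rpow_sub hq0, Real.rpow_one]
  have hq : q ≠ 0 := hq0.ne'
  have hx' : x ≠ 0 := hx.ne'
  have hqt' : q ^ t ≠ 0 := hqt.ne'
  unfold K qpochT
  rw [h1, h2, h3, h4, hmul, hq1t']
  rw [show (1:ℝ) + q ^ t * (1 / (q * x)) = (q * x + q ^ t) / (q * x) by field_simp,
      show (1:ℝ) + 1 / (q * x) = (q * x + 1) / (q * x) by field_simp,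
      show (1:ℝ) + q / q ^ t * x = (q ^ t + q * x) / q ^ t by field_simp]
  have d1 : q * x + q ^ t ≠ 0 := by positivity
  have d2 : q * x + 1 ≠ 0 := by positivity
  have d3 : q ^ t + q * x ≠ 0 := by positivity
  have d4 : (1:ℝ) + q * x ≠ 0 := by positivity
  have d5 : (1:ℝ) + x ≠ 0 := by positivity
  have hA4' : qpochInf q (q / q ^ t * (q * x)) ≠ 0 := by rw [← hq1t']; exact hA4
  set A1 := qpochInf q (1 / x)
  set A2 := qpochInf q (q ^ t * (1 / x))
  set A3 := qpochInf q (q * x)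
  set A4 := qpochInf q (q / q ^ t * (q * x))
  field_simp
  ring
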